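/- arXiv:1310.3647 — 4 statements merged into one kernel-verified Lean document; each statement's English description precedes it below -/
import Mathlib

section
/- Let G be a finite group with abelian Sylow p-subgroup P. If N_G(P) = C_G(P), then G has a normal p-complement, i.e. G = O_{p'}(G) ⋊ P. -/
/-- Burnside's normal `p`-complement theorem: if a finite group `G` has an abelian
Sylow `p`-subgroup `P` with `N_G(P) = C_G(P)`, then `G` has a normal `p`-complement,
i.e. `G = O_{p'}(G) ⋊ P`. -/
theorem burnside_normal_p_complement
    {G : Type*} [Group G] [Finite G] {p : ℕ} (hp : p.Prime) (P : Sylow p G)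
    (hab : IsMulCommutative (P : Subgroup G))
    (hNC : Subgroup.normalizer ((P : Subgroup G) : Set G) =
      Subgroup.centralizer ((P : Subgroup G) : Set G)) :
    ∃ K : Subgroup G, K.Normal ∧ Nat.Coprime (Nat.card K) p ∧
      Subgroup.IsComplement' K (P : Subgroup G) := by
  haveI : Fact p.Prime := ⟨hp⟩
  have hP : Subgroup.normalizer ((P : Subgroup G) : Set G) ≤ Subgroup.centralizer ((P : Subgroup G) : Set G) :=
    hNC.le
  refine ⟨(MonoidHom.transferSylow P hP).ker, MonoidHom.normal_ker _, ?_,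
    MonoidHom.ker_transferSylow_isComplement' P hP⟩
  exact (hp.coprime_iff_not_dvd.mpr (MonoidHom.not_dvd_card_ker_transferSylow P hP)).symm
end

section
/- Let G and H be finite groups with p dividing |H|, k algebraically closed of characteristic p, and M an indecomposable trivial source endo-trivial kG-module. Then M ⊗ k_H is an endo-trivial k[G×H]-module if and only if dim_k(M) = 1. -/
universe u

open Representation

/-- A representation `ρ` of `G` on a `k`-vector space `V` is endo-trivial if
`End_k(V) ≅ k ⊕ (proj)` as `kG`-modules. -/
def IsEndoTrivial {k G V : Type u} [Field k] [Group G] [AddCommGroup V] [Module k V]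
    (ρ : Representation k G V) : Prop :=
  ∃ (W : Type u) (_ : AddCommGroup W) (_ : Module (MonoidAlgebra k G) W),
    Module.Projective (MonoidAlgebra k G) W ∧
    Nonempty ((ρ.linHom ρ).asModule ≃ₗ[MonoidAlgebra k G]
      ((Representation.trivial k (G := G) (V := k)).asModule × W))

/-- A module is indecomposable if it is nonzero and admits no nontrivial direct sum
decomposition. -/
def IsIndecomposableModule (R M : Type*) [Ring R] [AddCommGroup M] [Module R M] :
    Prop :=
  Nontrivial M ∧ ∀ N₁ N₂ : Submodule R M, IsCompl N₁ N₂ → N₁ = ⊥ ∨ N₂ = ⊥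

/-- A `kG`-module has trivial source if it is a direct summand of a module induced from
the trivial module of some subgroup, i.e. of a permutation module `k[G ⧸ Q]`. -/
def HasTrivialSource {k G V : Type u} [Field k] [Group G] [AddCommGroup V] [Module k V]
    (ρ : Representation k G V) : Prop :=
  ∃ (Q : Subgroup G)
    (f : ρ.asModule →ₗ[MonoidAlgebra k G] (Representation.ofMulAction k G (G ⧸ Q)).asModule)
    (g : (Representation.ofMulAction k G (G ⧸ Q)).asModule →ₗ[MonoidAlgebra k G] ρ.asModule),
      g.comp f = LinearMap.id

section Aux
variable {k G H : Type u} [Field k] [Group G] [Group H]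

private lemma mapDomainRingHom_apply' {G' H' : Type u} [Monoid G'] [Monoid H'] (f : G' →* H')
    (x : MonoidAlgebra k G') :
    MonoidAlgebra.mapDomainRingHom k f x = MonoidAlgebra.mapDomain f x := rfl

private lemma aux_smul_eq {W : Type u} [AddCommGroup W] [Module (MonoidAlgebra k (G × H)) W]
    (htriv : ∀ (h : H) (w : W),
      (MonoidAlgebra.single ((1:G), h) (1:k)) • w = w)
    (w : W) (r : MonoidAlgebra k (G × H)) :
    r • w = (MonoidAlgebra.mapDomainRingHom k (MonoidHom.inl G H)
      (MonoidAlgebra.mapDomainRingHom k (MonoidHom.fst G H) r)) • w := by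
  induction r using MonoidAlgebra.induction_linear with
  | zero => simp
  | add f g hf hg => rw [map_add, map_add, add_smul, hf, hg, add_smul]
  | single a b =>
      obtain ⟨g, h⟩ := a
      rw [mapDomainRingHom_apply', mapDomainRingHom_apply', MonoidAlgebra.mapDomain_single,
        MonoidAlgebra.mapDomain_single]
      have h1 : (MonoidAlgebra.single ((g, h) : G × H) b) =
          MonoidAlgebra.single ((g, (1:H)) : G × H) b * MonoidAlgebra.single ((1:G), h) (1:k) := by
        rw [MonoidAlgebra.single_mul_single]
        simp
      have h2 : (MonoidAlgebra.single ((g, h) : G × H) b) • w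
          = (MonoidAlgebra.single ((g, (1:H)) : G × H) b) • w := by
        rw [h1, mul_smul, htriv]
      exact h2.trans (by rfl)

private lemma aux_mapDomain_fst_apply [Fintype H] (r : MonoidAlgebra k (G × H)) (g : G) :
    (MonoidAlgebra.mapDomainRingHom k (MonoidHom.fst G H) r).coeff g = ∑ h : H, r.coeff (g, h) := by
  classical
  induction r using MonoidAlgebra.induction_linear with
  | zero => simp
  | add f f' hf hf' =>
      rw [map_add, MonoidAlgebra.coeff_add, Finsupp.add_apply, hf, hf', ← Finset.sum_add_distrib]
      exact Finset.sum_congr rfl fun h _ => rfl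
  | single a b =>
      obtain ⟨g₀, h₀⟩ := a
      rw [mapDomainRingHom_apply', MonoidAlgebra.mapDomain_single]
      simp only [MonoidAlgebra.coeff_single, Finsupp.single_apply, Prod.mk.injEq, ite_and, MonoidHom.coe_fst]
      by_cases hg : g₀ = g
      · simp [hg]
      · simp [hg]

private lemma aux_ann [Fintype H] (r : MonoidAlgebra k (G × H))
    (hr : (∑ h : H, MonoidAlgebra.single ((1:G), h) (1:k)) * r = 0) :
    MonoidAlgebra.mapDomainRingHom k (MonoidHom.fst G H) r = 0 := by
  classical
  ext g
  rw [aux_mapDomain_fst_apply, MonoidAlgebra.coeff_zero, Finsupp.zero_apply]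
  have h1 := congrArg (fun z : MonoidAlgebra k (G × H) => z.coeff (g, (1:H))) hr
  simp only [Finset.sum_mul] at h1
  rw [MonoidAlgebra.coeff_sum, Finsupp.finset_sum_apply] at h1
  simp only [MonoidAlgebra.coeff_single_mul_apply, one_mul, MonoidAlgebra.coeff_zero, Finsupp.coe_zero, Pi.zero_apply] at h1
  rw [← Equiv.sum_comp (Equiv.inv H) (fun h => r.coeff (g, h)), ← h1]
  refine Finset.sum_congr rfl fun h _ => ?_
  congr 1
  simp [Prod.ext_iff]

end Aux
section Key
variable {k G H : Type u} [Field k] [Group G] [Group H]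

private lemma aux_subsingleton' [Fintype H] (hcard : ((Fintype.card H : k)) = 0)
    (W : Type u) [AddCommGroup W] [Module (MonoidAlgebra k (G × H)) W]
    (hproj : Module.Projective (MonoidAlgebra k (G × H)) W)
    (htriv : ∀ (h : H) (w : W), (MonoidAlgebra.single ((1:G), h) (1:k)) • w = w)
    (aux_smul_eq : ∀ (w : W) (r : MonoidAlgebra k (G × H)),
      r • w = (MonoidAlgebra.mapDomainRingHom k (MonoidHom.inl G H)
        (MonoidAlgebra.mapDomainRingHom k (MonoidHom.fst G H) r)) • w)
    (aux_ann : ∀ (r : MonoidAlgebra k (G × H)),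
      (∑ h : H, MonoidAlgebra.single ((1:G), h) (1:k)) * r = 0 →
      MonoidAlgebra.mapDomainRingHom k (MonoidHom.fst G H) r = 0) :
    Subsingleton W := by
  classical
  obtain ⟨s, hs⟩ := Module.projective_def.mp hproj
  set N : MonoidAlgebra k (G × H) := ∑ h : H, MonoidAlgebra.single ((1:G), h) (1:k) with hN
  have hNw : ∀ w : W, N • w = 0 := by
    intro w
    rw [hN, Finset.sum_smul]
    simp only [htriv]
    rw [Finset.sum_const, Finset.card_univ]
    have hc : ((Fintype.card H : MonoidAlgebra k (G × H))) = 0 := by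
      rw [← map_natCast (algebraMap k (MonoidAlgebra k (G × H))) (Fintype.card H), hcard,
        map_zero]
    rw [← Nat.cast_smul_eq_nsmul (MonoidAlgebra k (G × H)), hc, zero_smul]
  refine subsingleton_of_forall_eq 0 fun w => ?_
  have h0 : N • s w = 0 := by rw [← map_smul, hNw, map_zero]
  have key : ∀ m ∈ (s w).support, (s w) m • m = 0 := by
    intro m _
    have hm : N * (s w) m = 0 := by
      have h2 := congrArg (fun z : W →₀ MonoidAlgebra k (G × H) => z m) h0
      simpa using h2
    rw [aux_smul_eq, aux_ann _ hm, map_zero, zero_smul]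
  have h3 := hs w
  rw [Finsupp.linearCombination_apply, Finsupp.sum] at h3
  rw [← h3]
  exact Finset.sum_eq_zero fun m hm => by simpa using key m hm

end Key

section Key2
variable {k G H : Type u} [Field k] [Group G] [Group H]

private lemma aux_subsingleton [Fintype H] (hcard : ((Fintype.card H : k)) = 0)
    (W : Type u) [AddCommGroup W] [Module (MonoidAlgebra k (G × H)) W]
    (hproj : Module.Projective (MonoidAlgebra k (G × H)) W)
    (htriv : ∀ (h : H) (w : W), (MonoidAlgebra.single ((1:G), h) (1:k)) • w = w) :
    Subsingleton W :=
  aux_subsingleton' hcard W hproj htriv (fun w r => aux_smul_eq htriv w r)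
    (fun r hr => aux_ann r hr)
end Key2

section Main
variable {k : Type u} [Field k]

private lemma smul_single_asModule {Γ E' : Type u} [Group Γ] [AddCommGroup E'] [Module k E']
    (τ : Representation k Γ E') (x : Γ) (c : k) (f : τ.asModule) :
    τ.asModuleEquiv ((MonoidAlgebra.single x c : MonoidAlgebra k Γ) • f) =
      c • (τ x (τ.asModuleEquiv f)) := by
  rw [Representation.asModuleEquiv_map_smul, Representation.asAlgebraHom_single]
  rfl

private lemma smul_single_asModule_of_one {Γ E' : Type u} [Group Γ] [AddCommGroup E']
    [Module k E'] (τ : Representation k Γ E') (x : Γ) (hx : τ x = 1) (c : k)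
    (f : τ.asModule) :
    (MonoidAlgebra.single x c : MonoidAlgebra k Γ) • f = c • f := by
  have h1 := smul_single_asModule τ x c f
  rw [hx, Module.End.one_apply] at h1
  exact τ.asModuleEquiv.injective h1

private lemma punit_projective (R : Type u) [Ring R] : Module.Projective R PUnit.{u+1} :=
  Module.projective_def.mpr ⟨0, fun m => Subsingleton.elim _ _⟩

private lemma equiv_of_trivial {Γ E' : Type u} [Group Γ] [AddCommGroup E'] [Module k E']
    (τ : Representation k Γ E') (htriv : ∀ x : Γ, τ x = 1) (φ : E' ≃ₗ[k] k) :
    Nonempty (τ.asModule ≃ₗ[MonoidAlgebra k Γ]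
      ((Representation.trivial k (G := Γ) (V := k)).asModule × PUnit.{u+1})) := by
  have hT1 : ∀ x : Γ, (Representation.trivial k (G := Γ) (V := k)) x = 1 := fun _ => rfl
  refine ⟨{ toFun := fun f => (φ f, PUnit.unit)
            invFun := fun c => φ.symm c.1
            left_inv := fun f => φ.symm_apply_apply f
            right_inv := fun c => Prod.ext (φ.apply_symm_apply c.1) (Subsingleton.elim _ _)
            map_add' := fun f g => Prod.ext (map_add φ f g) rfl
            map_smul' := fun r f => Prod.ext ?_ (Subsingleton.elim _ _) }⟩
  simp only [Prod.smul_fst, RingHom.id_apply]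
  induction r using MonoidAlgebra.induction_linear with
  | zero =>
      exact (congrArg φ (zero_smul (MonoidAlgebra k Γ) f)).trans ((map_zero φ).trans
        (zero_smul (MonoidAlgebra k Γ)
          (show (Representation.trivial k (G := Γ) (V := k)).asModule from φ f)).symm)
  | add a b ha hb =>
      exact (congrArg φ (add_smul a b f)).trans ((map_add φ _ _).trans
        ((congrArg₂ (· + ·) ha hb).trans
          (add_smul a b (show (Representation.trivial k (G := Γ) (V := k)).asModule from φ f)).symm))
  | single x c =>
      rw [smul_single_asModule_of_one τ x (htriv x) c f,
        smul_single_asModule_of_one (Representation.trivial k (G := Γ) (V := k)) x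
          (hT1 x) c (φ f)]
      exact map_smul φ c f

end Main

/-- Let `G` and `H` be finite groups with `p ∣ |H|`, `k` algebraically closed of
characteristic `p`, and `M` an indecomposable trivial source endo-trivial `kG`-module.
Then `M ⊗ k_H` is an endo-trivial `k[G×H]`-module if and only if `dim_k M = 1`. -/
theorem ext_trivial_isEndoTrivial_iff {k G H : Type u} [Field k] [IsAlgClosed k]
    {p : ℕ} (hp : p.Prime) [CharP k p] [Group G] [Group H] [Finite G] [Finite H]
    (hdvd : p ∣ Nat.card H)
    {V : Type u} [AddCommGroup V] [Module k V] [FiniteDimensional k V]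
    (ρ : Representation k G V)
    (hind : IsIndecomposableModule (MonoidAlgebra k G) ρ.asModule)
    (hts : HasTrivialSource ρ) (het : IsEndoTrivial ρ) :
    IsEndoTrivial
        (Representation.tprod (MonoidHom.comp ρ (MonoidHom.fst G H))
          (MonoidHom.comp (Representation.trivial k (G := H) (V := k))
            (MonoidHom.snd G H))) ↔
      Module.finrank k V = 1 := by
  classical
  have : Fintype H := Fintype.ofFinite H
  set σ : Representation k (G × H) (TensorProduct k V k) :=
    Representation.tprod (MonoidHom.comp ρ (MonoidHom.fst G H))
      (MonoidHom.comp (Representation.trivial k (G := H) (V := k))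
        (MonoidHom.snd G H)) with hσ
  set T : Representation k (G × H) k := Representation.trivial k (G := G × H) (V := k) with hT
  have hσ1 : ∀ h : H, σ ((1:G), h) = 1 := by
    intro h
    ext x y
    simp [hσ, Representation.tprod_apply]
  have hlin1 : ∀ h : H, (σ.linHom σ) ((1:G), h) = 1 := by
    intro h
    ext f : 1
    rw [Representation.linHom_apply, Module.End.one_apply]
    have h2 : (((1:G), h) : G × H)⁻¹ = ((1:G), h⁻¹) := by simp
    rw [h2, hσ1, hσ1, Module.End.one_eq_id, LinearMap.comp_id, LinearMap.id_comp]
  have hT1 : ∀ x : G × H, T x = 1 := fun _ => rfl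
  have hcard : ((Fintype.card H : k)) = 0 := by
    rw [(CharP.cast_eq_zero_iff k p _)]
    rwa [← Nat.card_eq_fintype_card]
  haveI : Nontrivial V := hind.1
  constructor
  · rintro ⟨W, _, _, hproj, ⟨e⟩⟩
    have htrivW : ∀ (h : H) (w : W),
        (MonoidAlgebra.single ((1:G), h) (1:k) : MonoidAlgebra k (G × H)) • w = w := by
      intro h w
      have h1 : e ((MonoidAlgebra.single ((1:G), h) (1:k) : MonoidAlgebra k (G × H)) •
          e.symm ((0 : T.asModule), w)) = ((0 : T.asModule), w) := by
        rw [smul_single_asModule_of_one (σ.linHom σ) _ (hlin1 h), one_smul,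
          e.apply_symm_apply]
      rw [map_smul, e.apply_symm_apply, Prod.smul_mk, smul_zero] at h1
      have h2 := congrArg Prod.snd h1
      simpa using h2
    haveI hW : Subsingleton W := aux_subsingleton hcard W hproj htrivW
    have hsmulE : ∀ (c : k) (f : (σ.linHom σ).asModule), (e (c • f)).1 = c • (e f).1 := by
      intro c f
      calc (e (c • f)).1
          = (e ((MonoidAlgebra.single (1 : G × H) c : MonoidAlgebra k (G × H)) • f)).1 := by
            rw [smul_single_asModule_of_one (σ.linHom σ) 1 (map_one _) c f]
        _ = ((MonoidAlgebra.single (1 : G × H) c : MonoidAlgebra k (G × H)) • e f).1 := by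
            rw [map_smul]
        _ = (MonoidAlgebra.single (1 : G × H) c : MonoidAlgebra k (G × H)) • (e f).1 := rfl
        _ = c • (e f).1 := smul_single_asModule_of_one T 1 (hT1 1) c ((e f).1)
    let ℓ : (TensorProduct k V k →ₗ[k] TensorProduct k V k) →ₗ[k] k :=
      { toFun := fun f => (e f).1
        map_add' := fun f g => congrArg Prod.fst (map_add e f g)
        map_smul' := fun c f => hsmulE c f }
    have hinj : Function.Injective ℓ := by
      intro f g hfg
      apply e.injective
      exact Prod.ext hfg (Subsingleton.elim _ _)
    have hle := LinearMap.finrank_le_finrank_of_injective hinj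
    rw [Module.finrank_self, Module.finrank_linearMap, Module.finrank_tensorProduct,
      Module.finrank_self, mul_one] at hle
    have hpos : 0 < Module.finrank k V := Module.finrank_pos
    have h4 : Module.finrank k V ≤ Module.finrank k V * Module.finrank k V :=
      Nat.le_mul_of_pos_left _ hpos
    omega
  · intro hV
    have hE : Module.finrank k (TensorProduct k V k →ₗ[k] TensorProduct k V k) = 1 := by
      rw [Module.finrank_linearMap, Module.finrank_tensorProduct, Module.finrank_self,
        mul_one, hV]
    have hVk : Module.finrank k (TensorProduct k V k) = 1 := by
      rw [Module.finrank_tensorProduct, Module.finrank_self, mul_one, hV]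
    haveI : Nontrivial (TensorProduct k V k) := by
      apply Module.nontrivial_of_finrank_pos (R := k)
      omega
    have hid : (LinearMap.id : TensorProduct k V k →ₗ[k] TensorProduct k V k) ≠ 0 := by
      intro hcon
      obtain ⟨x, hx⟩ := exists_ne (0 : TensorProduct k V k)
      exact hx (by simpa using congrArg (fun f => f x) hcon)
    have hscalar := (finrank_eq_one_iff_of_nonzero' _ hid).mp hE
    have htrivall : ∀ x : G × H, (σ.linHom σ) x = 1 := by
      intro x
      ext f : 1
      obtain ⟨c, rfl⟩ := hscalar f
      rw [Representation.linHom_apply, Module.End.one_apply]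
      rw [LinearMap.smul_comp, LinearMap.id_comp, LinearMap.comp_smul,
        ← Module.End.mul_eq_comp, ← map_mul, mul_inv_cancel, map_one, Module.End.one_eq_id]
    obtain ⟨φ⟩ := FiniteDimensional.nonempty_linearEquiv_of_finrank_eq
      (hE.trans (Module.finrank_self k).symm)
    obtain ⟨eq⟩ := equiv_of_trivial (σ.linHom σ) htrivall φ
    exact ⟨PUnit.{u+1}, inferInstance, inferInstance,
      punit_projective (MonoidAlgebra k (G × H)), ⟨eq⟩⟩
end

section
/- Let G = H ⋊ P where H is the extraspecial group of order ℓ³ and exponent ℓ (ℓ an odd prime) with presentation ⟨a,b,c | a^ℓ = b^ℓ = c^ℓ = 1, [a,c] = [b,c] = 1, [a,b] = c⟩, and P = ⟨u⟩ × ⟨v⟩ ≅ C2 × C2 acts by: v acts trivially, a^u = a^{-1}, b^u = b^{-1}, c^u = c. Then N_G(P) = C_G(P) = Z(H) × P, where Z(H) = ⟨c⟩ ≅ C_ℓ. -/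
universe u

open scoped commutatorElement

section Aux

lemma auxComm {K : Type*} [Group K] {x y : K}
    (hgen : Subgroup.closure {x, y} = ⊤) (hxy : x * y = y * x) :
    ∀ s t : K, s * t = t * s := by
  have hcen : ∀ z ∈ ({x, y} : Set K), z ∈ Subgroup.center K := by
    intro z hz
    rw [Subgroup.mem_center_iff]
    intro g
    have hle : Subgroup.closure ({x, y} : Set K) ≤ Subgroup.centralizer {z} := by
      rw [Subgroup.closure_le]
      rintro w (rfl | rfl) <;> rw [SetLike.mem_coe, Subgroup.mem_centralizer_iff] <;>
        intro h hh <;> rw [Set.mem_singleton_iff] at hh <;> subst hh <;>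
        rcases hz with rfl | rfl
      · rfl
      · exact hxy.symm
      · exact hxy
      · rfl
    have hg : g ∈ Subgroup.centralizer {z} := hle (hgen ▸ Subgroup.mem_top g)
    exact (Subgroup.mem_centralizer_iff.mp hg z (Set.mem_singleton z)).symm
  have hle : Subgroup.closure ({x, y} : Set K) ≤ Subgroup.center K := by
    rw [Subgroup.closure_le]; exact hcen
  intro s t
  have hs : s ∈ Subgroup.center K := hle (hgen ▸ Subgroup.mem_top s)
  exact (Subgroup.mem_center_iff.mp hs t).symm

lemma auxCard {K : Type*} [Group K] [Fintype K] {x y : K} {ℓ : ℕ} (hℓ : 0 < ℓ)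
    (hx : x ^ ℓ = 1) (hy : y ^ ℓ = 1) (hxy : x * y = y * x)
    (hgen : Subgroup.closure {x, y} = ⊤) : Fintype.card K ≤ ℓ ^ 2 := by
  have comm := auxComm hgen hxy
  letI : CommGroup K := { (inferInstance : Group K) with mul_comm := comm }
  have hform : ∀ g : K, ∃ i j : ℕ, g = x ^ i * y ^ j := by
    intro g
    have hg : g ∈ Subgroup.closure ({x, y} : Set K) := hgen ▸ Subgroup.mem_top g
    induction hg using Subgroup.closure_induction with
    | mem w hw =>
      rcases hw with rfl | rfl
      · exact ⟨1, 0, by simp⟩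
      · exact ⟨0, 1, by simp⟩
    | one => exact ⟨0, 0, by simp⟩
    | mul s t hs ht ihs iht =>
      obtain ⟨i, j, rfl⟩ := ihs
      obtain ⟨i', j', rfl⟩ := iht
      exact ⟨i + i', j + j', by rw [pow_add, pow_add, mul_mul_mul_comm]⟩
    | inv s hs ihs =>
      obtain ⟨i, j, rfl⟩ := ihs
      refine ⟨(ℓ - 1) * i, (ℓ - 1) * j, ?_⟩
      have hkey : ∀ (z : K) (n : ℕ), z ^ ℓ = 1 → z ^ n * z ^ ((ℓ - 1) * n) = 1 := by
        intro z n hz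
        rw [← pow_add]
        have h1 : n + (ℓ - 1) * n = (ℓ - 1 + 1) * n := by ring
        have h2 : ℓ - 1 + 1 = ℓ := by omega
        rw [h1, h2, pow_mul, hz, one_pow]
      symm
      rw [eq_comm, inv_eq_iff_mul_eq_one, mul_mul_mul_comm, hkey x i hx, hkey y j hy, mul_one]
  have hsurj : Function.Surjective (fun p : Fin ℓ × Fin ℓ => x ^ (p.1 : ℕ) * y ^ (p.2 : ℕ)) := by
    intro g
    obtain ⟨i, j, rfl⟩ := hform g
    refine ⟨(⟨i % ℓ, Nat.mod_lt _ hℓ⟩, ⟨j % ℓ, Nat.mod_lt _ hℓ⟩), ?_⟩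
    simp only
    rw [← pow_eq_pow_mod i hx, ← pow_eq_pow_mod j hy]
  calc Fintype.card K ≤ Fintype.card (Fin ℓ × Fin ℓ) := Fintype.card_le_of_surjective _ hsurj
    _ = ℓ ^ 2 := by simp [pow_two]

end Aux

/-- Let `H` be the extraspecial group of order `ℓ³` and exponent `ℓ` (`ℓ` an odd
prime), generated by `a, b` with `c = [a,b]` central and all generators of order `ℓ`,
and let the Klein four-group `P = ⟨u⟩ × ⟨v⟩` act on `H` by: `v` acts trivially,
`a^u = a⁻¹`, `b^u = b⁻¹`, `c^u = c`.  Then in `G = H ⋊ P` one has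
`N_G(P) = C_G(P) = Z(H) × P`, where `Z(H) = ⟨c⟩ ≅ C_ℓ`. -/
theorem normalizer_eq_centralizer_extraspecial_semidirect
    (ℓ : ℕ) (hℓ : ℓ.Prime) (hodd : Odd ℓ)
    (H : Type u) [Group H] [Fintype H] (a b c : H)
    (hcard : Fintype.card H = ℓ ^ 3)
    (ha : a ^ ℓ = 1) (hb : b ^ ℓ = 1) (hc : c ^ ℓ = 1)
    (hab : ⁅a, b⁆ = c) (hac : ⁅a, c⁆ = 1) (hbc : ⁅b, c⁆ = 1)
    (hgen : Subgroup.closure {a, b} = (⊤ : Subgroup H))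
    (hexp : ∀ x : H, x ^ ℓ = 1)
    (φ : (Multiplicative (ZMod 2) × Multiplicative (ZMod 2)) →* MulAut H)
    (hva : φ (1, Multiplicative.ofAdd 1) = 1)
    (hua : φ (Multiplicative.ofAdd 1, 1) a = a⁻¹)
    (hub : φ (Multiplicative.ofAdd 1, 1) b = b⁻¹)
    (huc : φ (Multiplicative.ofAdd 1, 1) c = c) :
    (Subgroup.normalizer ((SemidirectProduct.inr :
        (Multiplicative (ZMod 2) × Multiplicative (ZMod 2)) →*
          H ⋊[φ] (Multiplicative (ZMod 2) × Multiplicative (ZMod 2))).range : Set (H ⋊[φ] (Multiplicative (ZMod 2) × Multiplicative (ZMod 2)))) =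
      Subgroup.centralizer
        ((SemidirectProduct.inr :
          (Multiplicative (ZMod 2) × Multiplicative (ZMod 2)) →*
            H ⋊[φ] (Multiplicative (ZMod 2) × Multiplicative (ZMod 2))).range : Set (H ⋊[φ] (Multiplicative (ZMod 2) × Multiplicative (ZMod 2))))) ∧
    (Subgroup.centralizer
        ((SemidirectProduct.inr :
          (Multiplicative (ZMod 2) × Multiplicative (ZMod 2)) →*
            H ⋊[φ] (Multiplicative (ZMod 2) × Multiplicative (ZMod 2))).range : Set (H ⋊[φ] (Multiplicative (ZMod 2) × Multiplicative (ZMod 2)))) =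
      (Subgroup.zpowers c).map SemidirectProduct.inl ⊔
        (SemidirectProduct.inr :
          (Multiplicative (ZMod 2) × Multiplicative (ZMod 2)) →*
            H ⋊[φ] (Multiplicative (ZMod 2) × Multiplicative (ZMod 2))).range) ∧
    Subgroup.center H = Subgroup.zpowers c ∧
    orderOf c = ℓ := by
  classical
  have hℓ2 : 2 ≤ ℓ := hℓ.two_le
  have hℓpos : 0 < ℓ := by omega
  -- `c` is central
  have hc_center : c ∈ Subgroup.center H := by
    rw [Subgroup.mem_center_iff]
    intro g
    have hle : Subgroup.closure ({a, b} : Set H) ≤ Subgroup.centralizer {c} := by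
      rw [Subgroup.closure_le]
      rintro w (rfl | rfl) <;> rw [SetLike.mem_coe, Subgroup.mem_centralizer_iff] <;>
        intro h hh <;> rw [Set.mem_singleton_iff] at hh <;> subst hh
      · exact (commutatorElement_eq_one_iff_mul_comm.mp hac).symm
      · exact (commutatorElement_eq_one_iff_mul_comm.mp hbc).symm
    have hg : g ∈ Subgroup.centralizer {c} := hle (hgen ▸ Subgroup.mem_top g)
    exact (Subgroup.mem_centralizer_iff.mp hg c (Set.mem_singleton c)).symm
  -- `c ≠ 1`
  have hcne : c ≠ 1 := by
    intro h1
    have hcomm : a * b = b * a := commutatorElement_eq_one_iff_mul_comm.mp (by rw [hab, h1])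
    have hle := auxCard hℓpos ha hb hcomm hgen
    rw [hcard] at hle
    have h23 : ℓ ^ 2 < ℓ ^ 3 := Nat.pow_lt_pow_right (by omega) (by omega)
    omega
  have horder : orderOf c = ℓ := by
    rcases hℓ.eq_one_or_self_of_dvd _ (orderOf_dvd_of_pow_eq_one hc) with h | h
    · exact absurd (orderOf_eq_one_iff.mp h) hcne
    · exact h
  -- the center is `⟨c⟩`
  have hzc_le : Subgroup.zpowers c ≤ Subgroup.center H := Subgroup.zpowers_le.mpr hc_center
  have hcardH : Nat.card H = ℓ ^ 3 := by rw [Nat.card_eq_fintype_card, hcard]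
  have hcard_zc : Nat.card (Subgroup.zpowers c) = ℓ := by rw [Nat.card_zpowers, horder]
  have hcenter : Subgroup.center H = Subgroup.zpowers c := by
    have hdvd : Nat.card (Subgroup.center H) ∣ ℓ ^ 3 :=
      hcardH ▸ Subgroup.card_subgroup_dvd_card _
    obtain ⟨i, hi3, hival⟩ := (Nat.dvd_prime_pow hℓ).mp hdvd
    have hldvd : ℓ ∣ Nat.card (Subgroup.center H) :=
      hcard_zc ▸ Subgroup.card_dvd_of_le hzc_le
    have hipos : 1 ≤ i := by
      by_contra h
      have : i = 0 := by omega
      rw [hival, this, pow_zero, Nat.dvd_one] at hldvd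
      omega
    by_cases hi1 : i = 1
    · subst hi1
      exact (Subgroup.eq_of_le_of_card_ge hzc_le
        (by rw [hival, pow_one, hcard_zc])).symm
    · exfalso
      have h2i : 2 ≤ i := by omega
      have hqcard : Nat.card (H ⧸ Subgroup.center H) * ℓ ^ i = ℓ ^ 3 := by
        rw [← hival, ← Subgroup.card_eq_card_quotient_mul_card_subgroup (Subgroup.center H),
          hcardH]
      have hq : Nat.card (H ⧸ Subgroup.center H) = ℓ ^ (3 - i) := by
        have hpow : ℓ ^ (3 - i) * ℓ ^ i = ℓ ^ 3 := by
          rw [← pow_add]; congr 1; omega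
        have := hqcard.trans hpow.symm
        exact Nat.eq_of_mul_eq_mul_right (Nat.pow_pos (n := i) hℓpos) this
      haveI : Fact ℓ.Prime := ⟨hℓ⟩
      haveI : IsCyclic (H ⧸ Subgroup.center H) := by
        rcases Nat.lt_or_ge i 3 with h3 | h3
        · have : 3 - i = 1 := by omega
          rw [this, pow_one] at hq
          exact isCyclic_of_prime_card hq
        · have : 3 - i = 0 := by omega
          rw [this, pow_zero] at hq
          haveI : Subsingleton (H ⧸ Subgroup.center H) :=
            (Nat.card_eq_one_iff_unique.mp hq).1
          infer_instance
      have hcommH := commutative_of_cyclic_center_quotient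
        (QuotientGroup.mk' (Subgroup.center H)) (by rw [QuotientGroup.ker_mk']) a b
      exact hcne (by rw [← hab, commutatorElement_eq_one_iff_mul_comm.mpr hcommH])
  -- quotient by `⟨c⟩`
  haveI hZnormal : (Subgroup.zpowers c).Normal := by
    constructor
    intro n hn g
    have hcentral : n ∈ Subgroup.center H := hzc_le hn
    have : g * n * g⁻¹ = n := by
      rw [Subgroup.mem_center_iff] at hcentral
      rw [hcentral g]
      group
    rwa [this]
  set Z := Subgroup.zpowers c with hZdef
  set π : H →* H ⧸ Z := QuotientGroup.mk' Z with hπdef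
  have hπsurj : Function.Surjective π := QuotientGroup.mk'_surjective Z
  have hπgen : Subgroup.closure ({π a, π b} : Set (H ⧸ Z)) = ⊤ := by
    have h1 : ({π a, π b} : Set (H ⧸ Z)) = π '' {a, b} := by
      rw [Set.image_pair]
    rw [h1, ← MonoidHom.map_closure, hgen, Subgroup.map_top_of_surjective π hπsurj]
  have hπc : π c = 1 := by
    rw [← MonoidHom.mem_ker, hπdef, QuotientGroup.ker_mk']
    exact Subgroup.mem_zpowers c
  have hπab : π a * π b = π b * π a := by
    rw [← commutatorElement_eq_one_iff_mul_comm, ← map_commutatorElement, hab, hπc]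
  have hQcomm := auxComm hπgen hπab
  set σ : MulAut H := φ (Multiplicative.ofAdd 1, 1) with hσdef
  have hkey : ∀ h : H, π (σ h) = (π h)⁻¹ := by
    intro h
    have hh : h ∈ Subgroup.closure ({a, b} : Set H) := hgen ▸ Subgroup.mem_top h
    induction hh using Subgroup.closure_induction with
    | mem w hw =>
      rcases hw with rfl | rfl
      · rw [show σ w = w⁻¹ from hua, map_inv]
      · rw [show σ w = w⁻¹ from hub, map_inv]
    | one => simp
    | mul s t hs ht ihs iht =>
      rw [map_mul, map_mul, map_mul, ihs, iht, mul_inv_rev, hQcomm]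
    | inv s hs ihs => rw [map_inv, map_inv, map_inv, ihs]
  have hfix_c : ∀ h ∈ Z, σ h = h := by
    rintro h ⟨k, rfl⟩
    rw [map_zpow, huc]
  have hfix : ∀ h : H, σ h = h → h ∈ Z := by
    intro h hh
    have h2 : π h = (π h)⁻¹ := by rw [← hkey h, hh]
    have h2' : π h ^ 2 = 1 := by
      rw [pow_two]
      nth_rewrite 2 [h2]
      exact mul_inv_cancel _
    have hl : π h ^ ℓ = 1 := by rw [← map_pow, hexp, map_one]
    have hne2 : ℓ ≠ 2 := by
      intro h'
      rw [h'] at hodd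
      exact (Nat.not_odd_iff_even.mpr (by decide)) hodd
    have hgcd : Nat.Coprime 2 ℓ := (Nat.coprime_primes Nat.prime_two hℓ).mpr (Ne.symm hne2) 
    have hord : orderOf (π h) ∣ Nat.gcd 2 ℓ :=
      Nat.dvd_gcd (orderOf_dvd_of_pow_eq_one h2') (orderOf_dvd_of_pow_eq_one hl)
    rw [hgcd] at hord
    have hπh : π h = 1 := orderOf_eq_one_iff.mp (Nat.dvd_one.mp hord)
    exact (QuotientGroup.eq_one_iff h).mp hπh
  -- classification of the action
  have hz2 : ∀ x : Multiplicative (ZMod 2), x = 1 ∨ x = Multiplicative.ofAdd 1 := by decide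
  have hφval : ∀ q : Multiplicative (ZMod 2) × Multiplicative (ZMod 2),
      φ q = 1 ∨ φ q = σ := by
    rintro ⟨x, y⟩
    have hy1 : φ ((1 : Multiplicative (ZMod 2)), y) = 1 := by
      rcases hz2 y with rfl | rfl
      · exact map_one φ
      · exact hva
    have hsplit : ((x, y) : Multiplicative (ZMod 2) × Multiplicative (ZMod 2)) =
        (x, 1) * (1, y) := by
      ext <;> simp
    rcases hz2 x with rfl | rfl
    · left; exact hy1
    · right
      rw [hsplit, map_mul, hy1, mul_one]
  have hcond : ∀ h : H,
      (∀ q : Multiplicative (ZMod 2) × Multiplicative (ZMod 2), φ q h = h) ↔ h ∈ Z := by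
    intro h
    constructor
    · intro hq
      exact hfix h (hq (Multiplicative.ofAdd 1, 1))
    · intro hh q
      rcases hφval q with he | he <;> rw [he]
      · rfl
      · exact hfix_c h hh
  -- now the semidirect product
  set R := (SemidirectProduct.inr :
    (Multiplicative (ZMod 2) × Multiplicative (ZMod 2)) →*
      H ⋊[φ] (Multiplicative (ZMod 2) × Multiplicative (ZMod 2))).range with hRdef
  have hmemR : ∀ g : H ⋊[φ] (Multiplicative (ZMod 2) × Multiplicative (ZMod 2)),
      g ∈ R ↔ g.left = 1 := by
    intro g
    constructor
    · rintro ⟨q, rfl⟩; rfl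
    · intro h
      exact ⟨g.right, by ext <;> simp [h]⟩
  have hcent : ∀ g : H ⋊[φ] (Multiplicative (ZMod 2) × Multiplicative (ZMod 2)),
      g ∈ Subgroup.centralizer (R : Set _) ↔
        (∀ q : Multiplicative (ZMod 2) × Multiplicative (ZMod 2), φ q g.left = g.left) := by
    intro g
    rw [Subgroup.mem_centralizer_iff]
    constructor
    · intro hcm q
      have h1 := hcm (SemidirectProduct.inr q) ⟨q, rfl⟩
      have h2 := congrArg SemidirectProduct.left h1
      simpa using h2
    · intro hq x hx
      obtain ⟨q, rfl⟩ := hx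
      have hl : (SemidirectProduct.inr q * g).left = (g * SemidirectProduct.inr q).left := by
        simp [hq q]
      have hr : (SemidirectProduct.inr q * g).right = (g * SemidirectProduct.inr q).right := by
        simp [mul_comm]
      exact SemidirectProduct.ext hl hr
  have hnorm_le : Subgroup.normalizer (R : Set (H ⋊[φ] (Multiplicative (ZMod 2) × Multiplicative (ZMod 2)))) ≤ Subgroup.centralizer (R : Set _) := by
    intro g hg
    rw [Subgroup.mem_normalizer_iff] at hg
    rw [hcent]
    intro q
    have h1 : g * SemidirectProduct.inr q * g⁻¹ ∈ R := (hg (SemidirectProduct.inr q)).mp ⟨q, rfl⟩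
    rw [hmemR] at h1
    have hcalc : (g * SemidirectProduct.inr q * g⁻¹).left = g.left * (φ q g.left)⁻¹ := by
      simp only [SemidirectProduct.mul_left, SemidirectProduct.mul_right,
        SemidirectProduct.left_inr, SemidirectProduct.right_inr, SemidirectProduct.inv_left,
        SemidirectProduct.inv_right, map_one, mul_one]
      rw [← MulAut.mul_apply, ← map_mul]
      have hcomm : g.right * q * g.right⁻¹ = q := by
        rw [mul_comm g.right q]
        group
      rw [hcomm, map_inv]
    rw [hcalc] at h1
    have := mul_inv_eq_one.mp h1
    exact this.symm
  have hcent_le_norm : Subgroup.centralizer (R : Set _) ≤ Subgroup.normalizer (R : Set (H ⋊[φ] (Multiplicative (ZMod 2) × Multiplicative (ZMod 2)))) := by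
    intro g hg
    rw [Subgroup.mem_normalizer_iff]
    intro x
    constructor
    · intro hx
      have hcm := Subgroup.mem_centralizer_iff.mp hg x hx
      rw [show g * x * g⁻¹ = x * g * g⁻¹ from by rw [← hcm], mul_assoc, mul_inv_cancel, mul_one]
      exact hx
    · intro hx
      have hcm := Subgroup.mem_centralizer_iff.mp hg _ hx
      have hx' : x = g⁻¹ * (g * x * g⁻¹ * g) := by group
      rw [hx', hcm]
      have hsimp : g⁻¹ * (g * (g * x * g⁻¹)) = g * x * g⁻¹ := by group
      rw [hsimp]
      exact hx
  refine ⟨le_antisymm hnorm_le hcent_le_norm, ?_, hcenter, horder⟩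
  apply le_antisymm
  · intro g hg
    rw [hcent] at hg
    have hgl : g.left ∈ Z := (hcond g.left).mp hg
    have hdecomp : g = SemidirectProduct.inl g.left * SemidirectProduct.inr g.right :=
      (SemidirectProduct.inl_left_mul_inr_right g).symm
    rw [hdecomp]
    exact Subgroup.mul_mem _
      (Subgroup.mem_sup_left (Subgroup.mem_map_of_mem _ hgl))
      (Subgroup.mem_sup_right ⟨g.right, rfl⟩)
  · apply sup_le
    · rintro x ⟨h, hh, rfl⟩
      rw [hcent]
      intro q
      simp only [SemidirectProduct.left_inl]
      exact (hcond h).mpr hh q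
    · rintro x ⟨q', rfl⟩
      rw [hcent]
      intro q
      simp
end

section
/- With G = H ⋊ P as above (H extraspecial of order ℓ³ and exponent ℓ, P ≅ C2 × C2 acting with v trivial and u inverting a and b), the 2'-part of the abelianization of G is trivial, while the 2'-part of the abelianization of N_G(P) = Z(H) × P is cyclic of order ℓ. -/
universe u

open scoped commutatorElement

/-- The `p'`-part of a commutative group: the subgroup of elements whose order is
coprime to `p`. -/
def pPrimePart (A : Type*) [CommGroup A] (p : ℕ) : Subgroup A where
  carrier := {x | Nat.Coprime (orderOf x) p}
  one_mem' := by simp [Nat.Coprime]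
  mul_mem' := by
    intro a b ha hb
    exact Nat.Coprime.coprime_dvd_left
      ((Commute.all a b).orderOf_mul_dvd_mul_orderOf) (Nat.Coprime.mul ha hb)
  inv_mem' := by
    intro a ha
    simpa using ha

lemma mem_pPrimePart {A : Type*} [CommGroup A] {p : ℕ} {x : A} :
    x ∈ pPrimePart A p ↔ Nat.Coprime (orderOf x) p := Iff.rfl

section Helpers
variable {G : Type*} [Group G]

lemma comm_of_commuting_gen {S : Set G} (hS : Subgroup.closure S = ⊤)
    (hc : ∀ x ∈ S, ∀ y ∈ S, Commute x y) (g h : G) : Commute g h := by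
  have step1 : ∀ y ∈ S, ∀ g : G, Commute y g := by
    intro y hy g
    have h1 : Subgroup.closure S ≤ Subgroup.centralizer {y} := by
      rw [Subgroup.closure_le]
      intro x hx
      simpa [Subgroup.mem_centralizer_iff, Commute, SemiconjBy] using (hc x hx y hy).symm.eq
    have h2 := h1 (hS ▸ Subgroup.mem_top g)
    rw [Subgroup.mem_centralizer_iff] at h2
    exact (h2 y rfl)
  have h1 : Subgroup.closure S ≤ Subgroup.centralizer {h} := by
    rw [Subgroup.closure_le]
    intro x hx
    simpa [Subgroup.mem_centralizer_iff, Commute, SemiconjBy] using (step1 x hx h).symm.eq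
  have h2 := h1 (hS ▸ Subgroup.mem_top g)
  rw [Subgroup.mem_centralizer_iff] at h2
  exact (h2 h rfl).symm

lemma isCyclic_zpowers (g : G) : IsCyclic (Subgroup.zpowers g) := by
  refine ⟨⟨⟨g, Subgroup.mem_zpowers g⟩, ?_⟩⟩
  rintro ⟨x, hx⟩
  obtain ⟨k, hk⟩ := Subgroup.mem_zpowers_iff.mp hx
  exact Subgroup.mem_zpowers_iff.mpr ⟨k, by ext; simp [hk]⟩

lemma odd_of_dvd_odd {d n : ℕ} (h : d ∣ n) (hn : Odd n) : Odd d := by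
  rcases Nat.even_or_odd d with he | ho
  · exact absurd (he.two_dvd.trans h) hn.not_two_dvd_nat
  · exact ho

lemma eq_one_of_pow_coprime {x : G} {m n : ℕ} (hm : x ^ m = 1) (hn : x ^ n = 1)
    (h : Nat.Coprime m n) : x = 1 := by
  have h1 : orderOf x ∣ m := orderOf_dvd_of_pow_eq_one hm
  have h2 : orderOf x ∣ n := orderOf_dvd_of_pow_eq_one hn
  have h3 : orderOf x ∣ 1 := h ▸ Nat.dvd_gcd h1 h2
  rw [Nat.dvd_one] at h3
  exact orderOf_eq_one_iff.mp h3

lemma zpow_cast_val {ℓ : ℕ} [NeZero ℓ] (x : G) (hx : x ^ ℓ = 1) (i : ℤ) :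
    x ^ (((i : ZMod ℓ)).val) = x ^ i := by
  have h0 : (((((i : ZMod ℓ)).val : ℤ)) : ZMod ℓ) = (i : ZMod ℓ) := by
    push_cast
    exact ZMod.natCast_rightInverse _
  have h1 : (ℓ : ℤ) ∣ i - (((i : ZMod ℓ)).val : ℤ) := by
    rw [← ZMod.intCast_zmod_eq_zero_iff_dvd]
    push_cast [h0]
    ring
  obtain ⟨k, hk⟩ := h1
  set m : ℕ := ((i : ZMod ℓ)).val with hm
  have h2 : i = (m : ℤ) + ℓ * k := by omega
  conv_rhs => rw [h2]
  rw [zpow_add, zpow_natCast, zpow_mul, zpow_natCast, hx, one_zpow, mul_one]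

/-- With `G = H ⋊ P` (`H` extraspecial of order `ℓ³` and exponent `ℓ`,
`P ≅ C2 × C2` acting with `v` trivial and `u` inverting `a` and `b`), the `2'`-part of
the abelianization of `G` is trivial, while the `2'`-part of the abelianization of
`N_G(P) = Z(H) × P` is cyclic of order `ℓ`. -/
theorem pPrimePart_abelianization_extraspecial_semidirect
    (ℓ : ℕ) (hℓ : ℓ.Prime) (hodd : Odd ℓ)
    (H : Type u) [Group H] [Fintype H] (a b c : H)
    (hcard : Fintype.card H = ℓ ^ 3)
    (ha : a ^ ℓ = 1) (hb : b ^ ℓ = 1) (hc : c ^ ℓ = 1)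
    (hab : ⁅a, b⁆ = c) (hac : ⁅a, c⁆ = 1) (hbc : ⁅b, c⁆ = 1)
    (hgen : Subgroup.closure {a, b} = (⊤ : Subgroup H))
    (hexp : ∀ x : H, x ^ ℓ = 1)
    (φ : (Multiplicative (ZMod 2) × Multiplicative (ZMod 2)) →* MulAut H)
    (hva : φ (1, Multiplicative.ofAdd 1) = 1)
    (hua : φ (Multiplicative.ofAdd 1, 1) a = a⁻¹)
    (hub : φ (Multiplicative.ofAdd 1, 1) b = b⁻¹)
    (huc : φ (Multiplicative.ofAdd 1, 1) c = c) :
    pPrimePart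
        (Abelianization (H ⋊[φ] (Multiplicative (ZMod 2) × Multiplicative (ZMod 2)))) 2 =
      ⊥ ∧
    IsCyclic
      (pPrimePart
        (Abelianization
          (Subgroup.normalizer ((SemidirectProduct.inr :
              (Multiplicative (ZMod 2) × Multiplicative (ZMod 2)) →*
                H ⋊[φ] (Multiplicative (ZMod 2) × Multiplicative (ZMod 2))).range :
              Set (H ⋊[φ] (Multiplicative (ZMod 2) × Multiplicative (ZMod 2))))))
        2) ∧
    Nat.card
      (pPrimePart
        (Abelianization
          (Subgroup.normalizer ((SemidirectProduct.inr :
              (Multiplicative (ZMod 2) × Multiplicative (ZMod 2)) →*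
                H ⋊[φ] (Multiplicative (ZMod 2) × Multiplicative (ZMod 2))).range :
              Set (H ⋊[φ] (Multiplicative (ZMod 2) × Multiplicative (ZMod 2))))))
        2) = ℓ := by
  haveI : NeZero ℓ := ⟨hℓ.ne_zero⟩
  set P := Multiplicative (ZMod 2) × Multiplicative (ZMod 2) with hPdef
  set u : P := (Multiplicative.ofAdd 1, 1) with hudef
  -- basic facts about P
  have hPsq : ∀ q : P, q * q = 1 := by decide
  have hPcases : ∀ q : P, q = 1 ∨ q = u ∨ q = (1, Multiplicative.ofAdd 1) ∨
      q = u * (1, Multiplicative.ofAdd 1) := by decide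
  have hφ : ∀ q : P, φ q = 1 ∨ φ q = φ u := by
    intro q
    rcases hPcases q with h | h | h | h
    · left; rw [h, map_one]
    · right; rw [h]
    · left; rw [h, hva]
    · right; rw [h, map_mul, hva, mul_one]
  -- c is central
  have hc_central : ∀ x : H, Commute c x := by
    intro x
    have h1 : Subgroup.closure {a, b} ≤ Subgroup.centralizer {c} := by
      rw [Subgroup.closure_le]
      rintro y hy
      simp only [SetLike.mem_coe, Subgroup.mem_centralizer_iff]
      rintro z rfl
      rcases hy with rfl | rfl
      · exact (commutatorElement_eq_one_iff_commute.mp hac).symm.eq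
      · exact (commutatorElement_eq_one_iff_commute.mp hbc).symm.eq
    have h2 := h1 (hgen ▸ Subgroup.mem_top x)
    rw [Subgroup.mem_centralizer_iff] at h2
    exact h2 c rfl
  -- zpowers c is normal
  haveI hZnormal : (Subgroup.zpowers c).Normal := by
    constructor
    rintro n hn g
    obtain ⟨k, rfl⟩ := Subgroup.mem_zpowers_iff.mp hn
    have : g * c ^ k * g⁻¹ = c ^ k := by
      have := ((hc_central g).zpow_left k).eq
      rw [← this, mul_assoc, mul_inv_cancel, mul_one]
    rw [this]
    exact Subgroup.zpow_mem _ (Subgroup.mem_zpowers c) k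
  -- the quotient Q
  set Z := Subgroup.zpowers c with hZdef
  set mkQ : H →* H ⧸ Z := QuotientGroup.mk' Z with hmkQdef
  have hmkQ_surj : Function.Surjective mkQ := QuotientGroup.mk'_surjective Z
  have hcQ : mkQ c = 1 := (QuotientGroup.eq_one_iff c).mpr (Subgroup.mem_zpowers c)
  have hQgen : Subgroup.closure {mkQ a, mkQ b} = (⊤ : Subgroup (H ⧸ Z)) := by
    have : ({mkQ a, mkQ b} : Set (H ⧸ Z)) = mkQ '' {a, b} := by
      rw [Set.image_insert_eq, Set.image_singleton]
    rw [this, ← MonoidHom.map_closure, hgen,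
      Subgroup.map_top_of_surjective mkQ hmkQ_surj]
  have hQcomm : ∀ x y : H ⧸ Z, Commute x y := by
    apply comm_of_commuting_gen hQgen
    have hcab : Commute (mkQ a) (mkQ b) := by
      rw [← commutatorElement_eq_one_iff_commute, ← map_commutatorElement, hab, hcQ]
    rintro x (rfl | rfl) y (rfl | rfl)
    · exact Commute.refl _
    · exact hcab
    · exact hcab.symm
    · exact Commute.refl _
  -- the key fact : φ u acts as inversion modulo Z
  have hkey : ∀ h : H, mkQ (φ u h) = (mkQ h)⁻¹ := by
    let T : Subgroup H :=
      { carrier := {h | mkQ (φ u h) = (mkQ h)⁻¹}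
        one_mem' := by simp
        mul_mem' := by
          rintro x y hx hy
          simp only [Set.mem_setOf_eq, map_mul] at *
          rw [hx, hy, mul_inv_rev, (hQcomm (mkQ y)⁻¹ (mkQ x)⁻¹).eq]
        inv_mem' := by
          rintro x hx
          simp only [Set.mem_setOf_eq, map_inv] at *
          rw [hx] }
    have hT : Subgroup.closure {a, b} ≤ T := by
      rw [Subgroup.closure_le]
      rintro x (rfl | rfl)
      · show mkQ (φ u x) = (mkQ x)⁻¹
        rw [hua, map_inv]
      · show mkQ (φ u x) = (mkQ x)⁻¹
        rw [hub, map_inv]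
    intro h
    exact hT (hgen ▸ Subgroup.mem_top h)
  have hcop2ℓ : Nat.Coprime 2 ℓ := hodd.coprime_two_left
  -- fixed points of φ u are exactly Z
  have hfix_iff : ∀ h : H, φ u h = h ↔ h ∈ Z := by
    intro h
    constructor
    · intro hfix
      have h1 : (mkQ h)⁻¹ = mkQ h := by rw [← hkey, hfix]
      have h2 : mkQ h ^ 2 = 1 := by
        rw [sq]
        nth_rewrite 1 [← h1]
        exact inv_mul_cancel _
      have h3 : mkQ h ^ ℓ = 1 := by rw [← map_pow, hexp, map_one]
      have := eq_one_of_pow_coprime h2 h3 hcop2ℓ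
      exact (QuotientGroup.eq_one_iff h).mp this
    · rintro hmem
      obtain ⟨k, rfl⟩ := Subgroup.mem_zpowers_iff.mp hmem
      rw [map_zpow, huc]
  have hφZ : ∀ q : P, ∀ h ∈ Z, φ q h = h := by
    intro q h hm
    rcases hφ q with h1 | h1
    · rw [h1]; rfl
    · rw [h1]; exact (hfix_iff h).mpr hm
  -- membership in inr.range
  have hinr_mem : ∀ g : H ⋊[φ] P,
      g ∈ (SemidirectProduct.inr : P →* H ⋊[φ] P).range ↔ g.left = 1 := by
    intro g
    constructor
    · rintro ⟨q, rfl⟩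
      exact SemidirectProduct.left_inr q
    · intro h1
      refine ⟨g.right, ?_⟩
      ext <;> simp [h1]
  -- conjugation formula
  have hconj_left : ∀ g n : H ⋊[φ] P, (g * n * g⁻¹).left
      = g.left * φ g.right n.left * φ n.right g.left⁻¹ := by
    intro g n
    rw [SemidirectProduct.mul_left, SemidirectProduct.mul_left, SemidirectProduct.inv_left,
      SemidirectProduct.mul_right]
    have h2 : φ (g.right * n.right) ((φ g.right⁻¹) g.left⁻¹) = φ n.right g.left⁻¹ := by
      rw [← MulAut.mul_apply, ← map_mul, mul_comm g.right n.right, mul_inv_cancel_right]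
    rw [h2]
  -- the normalizer
  have hNmem : ∀ g : H ⋊[φ] P,
      g ∈ Subgroup.normalizer (((SemidirectProduct.inr : P →* H ⋊[φ] P).range : Set (H ⋊[φ] P))) ↔ g.left ∈ Z := by
    intro g
    rw [Subgroup.mem_normalizer_iff]
    have main : (∀ n, n ∈ (SemidirectProduct.inr : P →* H ⋊[φ] P).range ↔
        g * n * g⁻¹ ∈ (SemidirectProduct.inr : P →* H ⋊[φ] P).range) ↔
        (∀ q : P, φ q g.left = g.left) := by
      constructor
      · intro hg q
        have h1 := (hg (SemidirectProduct.inr q)).mp ⟨q, rfl⟩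
        rw [hinr_mem, hconj_left, SemidirectProduct.left_inr, map_one, mul_one,
          SemidirectProduct.right_inr] at h1
        have h2 : φ q g.left⁻¹ = g.left⁻¹ := by
          have := mul_left_cancel (a := g.left) (b := φ q g.left⁻¹) (c := g.left⁻¹)
          apply this
          rw [h1, mul_inv_cancel]
        have h3 : ((φ q g.left)⁻¹ : H) = g.left⁻¹ := by rw [← map_inv]; exact h2
        exact inv_injective h3
      · intro hfix n
        rw [hinr_mem, hinr_mem, hconj_left]
        have h2 : φ n.right g.left⁻¹ = g.left⁻¹ := by rw [map_inv, hfix]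
        rw [h2]
        constructor
        · intro h1
          rw [h1, map_one, mul_one, mul_inv_cancel]
        · intro h1
          have h3 : φ g.right n.left = 1 := by
            have h4 : g.left * φ g.right n.left = g.left := by
              calc g.left * φ g.right n.left
                  = g.left * φ g.right n.left * g.left⁻¹ * g.left := by
                    rw [mul_assoc, inv_mul_cancel, mul_one]
                _ = 1 * g.left := by rw [h1]
                _ = g.left := one_mul _
            have h5 := mul_left_cancel (a := g.left)
              (b := φ g.right n.left) (c := 1) (by rw [h4, mul_one])
            exact h5
          exact (φ g.right).injective (by rw [h3, map_one])
    rw [main]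
    constructor
    · intro hfix
      exact (hfix_iff g.left).mp (hfix u)
    · intro hm q
      exact hφZ q g.left hm
  -- c is nontrivial
  have hcne : c ≠ 1 := by
    intro h1
    have hcomm_ab : Commute a b := commutatorElement_eq_one_iff_commute.mp (hab.trans h1)
    have hall : ∀ x y : H, Commute x y := by
      apply comm_of_commuting_gen hgen
      rintro x (rfl | rfl) y (rfl | rfl)
      · exact Commute.refl _
      · exact hcomm_ab
      · exact hcomm_ab.symm
      · exact Commute.refl _
    let S' : Subgroup H :=
      { carrier := {h | ∃ i j : ℤ, a ^ i * b ^ j = h}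
        one_mem' := ⟨0, 0, by simp⟩
        mul_mem' := by
          rintro x y ⟨i, j, rfl⟩ ⟨i', j', rfl⟩
          refine ⟨i + i', j + j', ?_⟩
          have h := ((hall a b).zpow_zpow i' j).eq
          calc a ^ (i + i') * b ^ (j + j')
              = a ^ i * (a ^ i' * b ^ j) * b ^ j' := by rw [zpow_add, zpow_add]; group
            _ = a ^ i * (b ^ j * a ^ i') * b ^ j' := by rw [h]
            _ = a ^ i * b ^ j * (a ^ i' * b ^ j') := by group
        inv_mem' := by
          rintro x ⟨i, j, rfl⟩
          refine ⟨-i, -j, ?_⟩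
          calc a ^ (-i) * b ^ (-j) = (a ^ i)⁻¹ * (b ^ j)⁻¹ := by
                rw [zpow_neg, zpow_neg]
            _ = (b ^ j)⁻¹ * (a ^ i)⁻¹ := (((hall a b).zpow_zpow i j).inv_inv.eq)
            _ = (a ^ i * b ^ j)⁻¹ := (mul_inv_rev _ _).symm }
    have hS' : ∀ h : H, ∃ i j : ℤ, a ^ i * b ^ j = h := by
      intro h
      have hle : Subgroup.closure {a, b} ≤ S' := by
        rw [Subgroup.closure_le]
        rintro x (rfl | rfl)
        · exact ⟨1, 0, by simp⟩
        · exact ⟨0, 1, by simp⟩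
      exact hle (hgen ▸ Subgroup.mem_top h)
    have hsurj : Function.Surjective
        (fun p : ZMod ℓ × ZMod ℓ => a ^ (p.1.val) * b ^ (p.2.val)) := by
      intro h
      obtain ⟨i, j, rfl⟩ := hS' h
      exact ⟨((i : ZMod ℓ), (j : ZMod ℓ)), by
        simp only []
        rw [zpow_cast_val a ha i, zpow_cast_val b hb j]⟩
    have hcardle : Fintype.card H ≤ Fintype.card (ZMod ℓ × ZMod ℓ) :=
      Fintype.card_le_of_surjective _ hsurj
    rw [Fintype.card_prod, ZMod.card, hcard] at hcardle
    have : ℓ * ℓ < ℓ ^ 3 := by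
      have h1 : ℓ ^ 2 < ℓ ^ 3 := Nat.pow_lt_pow_right hℓ.one_lt (by norm_num)
      calc ℓ * ℓ = ℓ ^ 2 := (sq ℓ).symm
        _ < ℓ ^ 3 := h1
    omega
  have horderc : orderOf c = ℓ := by
    haveI : Fact ℓ.Prime := ⟨hℓ⟩
    exact orderOf_eq_prime hc hcne
  -- the normalizer N
  set N := Subgroup.normalizer (((SemidirectProduct.inr : P →* H ⋊[φ] P).range : Set (H ⋊[φ] P))) with hNdef
  have hZcomm : ∀ x ∈ Z, ∀ y : H, x * y = y * x := by
    rintro x hx y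
    obtain ⟨k, rfl⟩ := Subgroup.mem_zpowers_iff.mp hx
    exact ((hc_central y).zpow_left k).eq
  have hNcomm : ∀ x y : ↥N, x * y = y * x := by
    rintro ⟨x, hx⟩ ⟨y, hy⟩
    rw [hNmem] at hx hy
    apply Subtype.ext
    show x * y = y * x
    refine SemidirectProduct.ext ?_ ?_
    · rw [SemidirectProduct.mul_left, SemidirectProduct.mul_left,
        hφZ x.right y.left hy, hφZ y.right x.left hx]
      exact (hZcomm x.left hx y.left)
    · rw [SemidirectProduct.mul_right, SemidirectProduct.mul_right, mul_comm]
  have hcNmem : (SemidirectProduct.inl c : H ⋊[φ] P) ∈ N := by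
    rw [hNmem, SemidirectProduct.left_inl]
    exact Subgroup.mem_zpowers c
  set cN : ↥N := ⟨SemidirectProduct.inl c, hcNmem⟩ with hcNdef
  have hcoe_zpow : ∀ k : ℤ, ((cN ^ k : ↥N) : H ⋊[φ] P) = SemidirectProduct.inl (c ^ k) := by
    intro k
    have h0 : ((cN : H ⋊[φ] P)) = SemidirectProduct.inl c := rfl
    rw [SubgroupClass.coe_zpow, h0, ← map_zpow]
  have hcNpow : cN ^ ℓ = 1 := by
    apply Subtype.ext
    show ((cN ^ ℓ : ↥N) : H ⋊[φ] P) = 1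
    rw [SubgroupClass.coe_pow]
    show (SemidirectProduct.inl c : H ⋊[φ] P) ^ ℓ = 1
    rw [← map_pow, hc, map_one]
  have hcNne : cN ≠ 1 := by
    intro h1
    apply hcne
    have h2 := congrArg (Subtype.val) h1
    exact SemidirectProduct.inl_injective
      (show (SemidirectProduct.inl c : H ⋊[φ] P) = SemidirectProduct.inl 1 by
        rw [map_one]; exact h2)
  have hordercN : orderOf cN = ℓ := by
    haveI : Fact ℓ.Prime := ⟨hℓ⟩
    exact orderOf_eq_prime hcNpow hcNne
  have hP2N : ∀ x : ↥N, Nat.Coprime (orderOf x) 2 ↔ x ∈ Subgroup.zpowers cN := by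
    intro x
    constructor
    · intro hx
      have hxpow : x ^ (orderOf x) = 1 := pow_orderOf_eq_one x
      have hcoe : ((x : H ⋊[φ] P)) ^ (orderOf x) = 1 := by
        rw [← SubgroupClass.coe_pow, hxpow]; rfl
      have h2 := congrArg SemidirectProduct.rightHom hcoe
      rw [map_pow, map_one] at h2
      have hq1 : SemidirectProduct.rightHom ((x : H ⋊[φ] P)) = 1 :=
        eq_one_of_pow_coprime h2 (by rw [sq]; exact hPsq _) hx
      have hxl : ((x : H ⋊[φ] P)).left ∈ Z := (hNmem _).mp x.2
      obtain ⟨k, hk⟩ := Subgroup.mem_zpowers_iff.mp hxl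
      refine Subgroup.mem_zpowers_iff.mpr ⟨k, ?_⟩
      apply Subtype.ext
      rw [hcoe_zpow]
      refine SemidirectProduct.ext ?_ ?_
      · rw [SemidirectProduct.left_inl]; exact hk
      · rw [SemidirectProduct.right_inl]; exact hq1.symm
    · intro hx
      obtain ⟨k, hk⟩ := Subgroup.mem_zpowers_iff.mp hx
      have hxpow : x ^ ℓ = 1 := by
        rw [← hk, ← zpow_natCast, ← zpow_mul, mul_comm, zpow_mul, zpow_natCast, hcNpow,
          one_zpow]
      have hdvd : orderOf x ∣ ℓ := orderOf_dvd_of_pow_eq_one hxpow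
      exact (odd_of_dvd_odd hdvd hodd).coprime_two_right
  letI instComm : CommGroup ↥N := { (inferInstance : Group ↥N) with mul_comm := hNcomm }
  have e : ↥N ≃* Abelianization ↥N := @Abelianization.equivOfComm ↥N instComm
  have hordere : orderOf (e cN) = ℓ := by
    rw [e.orderOf_eq, hordercN]
  have hP2A : pPrimePart (Abelianization ↥N) 2 = Subgroup.zpowers (e cN) := by
    ext x
    obtain ⟨y, rfl⟩ := e.surjective x
    rw [mem_pPrimePart, Subgroup.mem_zpowers_iff]
    have horder : orderOf (e y) = orderOf y := e.orderOf_eq y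
    rw [horder, hP2N y, Subgroup.mem_zpowers_iff]
    constructor
    · rintro ⟨k, hk⟩
      exact ⟨k, by rw [← map_zpow]; exact congrArg e hk⟩
    · rintro ⟨k, hk⟩
      exact ⟨k, e.injective (by rw [map_zpow]; exact hk)⟩
  -- part 1 : triviality for the full group
  have part1 : pPrimePart (Abelianization (H ⋊[φ] P)) 2 = ⊥ := by
    have hπH : ∀ h : H, Abelianization.of (SemidirectProduct.inl h : H ⋊[φ] P) = 1 := by
      have haux : ∀ x : H, (φ u) x = x⁻¹ →
          Abelianization.of (SemidirectProduct.inl x : H ⋊[φ] P) = 1 := by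
        intro x hx
        have h1 : (SemidirectProduct.inl ((φ u) x) : H ⋊[φ] P)
            = SemidirectProduct.inr u * SemidirectProduct.inl x * SemidirectProduct.inr u⁻¹ :=
          SemidirectProduct.inl_aut u x
        rw [hx] at h1
        have h2 : Abelianization.of (SemidirectProduct.inl x⁻¹ : H ⋊[φ] P)
            = Abelianization.of (SemidirectProduct.inl x : H ⋊[φ] P) := by
          rw [h1]
          simp only [map_mul, map_inv]
          rw [mul_comm (Abelianization.of (SemidirectProduct.inr u)), mul_assoc,
            mul_inv_cancel, mul_one]
        simp only [map_inv] at h2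
        have h3 : Abelianization.of (SemidirectProduct.inl x : H ⋊[φ] P) ^ 2 = 1 := by
          rw [sq]
          nth_rewrite 1 [← h2]
          rw [inv_mul_cancel]
        have h4 : Abelianization.of (SemidirectProduct.inl x : H ⋊[φ] P) ^ ℓ = 1 := by
          rw [← map_pow, ← map_pow, hexp, map_one, map_one]
        exact eq_one_of_pow_coprime h3 h4 hcop2ℓ
      have hker : Subgroup.closure {a, b} ≤
          ((Abelianization.of).comp (SemidirectProduct.inl : H →* H ⋊[φ] P)).ker := by
        rw [Subgroup.closure_le]
        rintro x (rfl | rfl)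
        · exact haux x hua
        · exact haux x hub
      intro h
      exact hker (hgen ▸ Subgroup.mem_top h)
    have hsq' : ∀ g : H ⋊[φ] P, (Abelianization.of g) ^ 2 = 1 := by
      intro g
      rw [← SemidirectProduct.inl_left_mul_inr_right g, map_mul, hπH, one_mul, ← map_pow, ← map_pow,
        sq, hPsq, map_one, map_one]
    have hsq : ∀ x : Abelianization (H ⋊[φ] P), x ^ 2 = 1 := by
      intro x
      obtain ⟨g, rfl⟩ := (QuotientGroup.mk'_surjective _ : Function.Surjective
        (Abelianization.of : (H ⋊[φ] P) →* Abelianization (H ⋊[φ] P))) x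
      exact hsq' g
    ext x
    rw [mem_pPrimePart, Subgroup.mem_bot]
    constructor
    · intro hx
      have h1 : orderOf x ∣ 2 := orderOf_dvd_of_pow_eq_one (hsq x)
      have h2 : orderOf x ∣ 1 := hx ▸ Nat.dvd_gcd dvd_rfl h1
      rw [Nat.dvd_one] at h2
      exact orderOf_eq_one_iff.mp h2
    · rintro rfl
      simp [Nat.Coprime]
  refine ⟨part1, ?_, ?_⟩
  · rw [hP2A]
    exact isCyclic_zpowers _
  · rw [hP2A, Nat.card_zpowers, hordere]
end Helpers
end
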